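/- Let n ≥ 1 and let X ⊆ Y_1 × ⋯ × Y_{n+1} be a Sternfeld-type embedding of a compact metrizable space X with respect to a decomposition X = A_1 ∪ ⋯ ∪ A_{n+1} into zero-dimensional subsets. Then the embedding is basic, i.e. the induced transformation L : C(Z,ℝ) → C(X,ℝ) is surjective: every continuous f : X → ℝ can be written as f(x) = g(y_1) + ⋯ + g(y_{n+1}) for some continuous g : Z → ℝ, where (y_1,…,y_{n+1}) are the coordinates of x. -/

import Mathlib

open Topology

/-- The topology of pointwise convergence on `C(T, ℝ)`: the topology induced from the
product topology on `ℝ^T` via the canonical injection. -/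
def cpTop (T : Type*) [TopologicalSpace T] : TopologicalSpace C(T, ℝ) :=
  TopologicalSpace.induced (fun f => (f : T → ℝ)) Pi.topologicalSpace

/-- A subset `A` of a topological space is zero-dimensional if the subspace `A` has a
topological base consisting of sets clopen in `A`. -/
def ZeroDimSubset {X : Type*} [TopologicalSpace X] (A : Set X) : Prop :=
  ∀ (a : A) (U : Set A), IsOpen U → a ∈ U → ∃ V : Set A, IsClopen V ∧ a ∈ V ∧ V ⊆ U

/-- The transformation induced by an embedding `X ⊆ Y₁ × ⋯ × Y_k`:
`L g x = g y₁ + ⋯ + g y_k`, where `(y₁, …, y_k)` are the coordinates of `x`, each `yᵢ`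
regarded as a point of the disjoint union `Z = Σ i, Y i`. -/
noncomputable def inducedL {ι : Type*} [Fintype ι] {Y : ι → Type*}
    [∀ i, TopologicalSpace (Y i)] (X : Set (Π i, Y i))
    (g : C((Σ i, Y i), ℝ)) : C(X, ℝ) where
  toFun x := ∑ i, g ⟨i, (x : Π i, Y i) i⟩
  continuous_toFun := by
    apply continuous_finset_sum
    intro i _
    exact g.continuous.comp (continuous_sigmaMk.comp
      ((continuous_apply i).comp continuous_subtype_val))

section Aux

lemma sternfeld_sum_le_one_helper {ι : Type*} (s : Finset ι) (v : ι → ℝ)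
    (h01 : ∀ m ∈ s, v m ∈ Set.Icc (0:ℝ) 1)
    (h2 : ∀ m ∈ s, ∀ l ∈ s, v m ≠ 0 → v l ≠ 0 → m = l) :
    ∑ m ∈ s, v m ≤ 1 := by
  by_cases h : ∃ m ∈ s, v m ≠ 0
  · obtain ⟨m, hm, hvm⟩ := h
    rw [Finset.sum_eq_single_of_mem m hm (fun l hl hne => by
      by_contra hvl; exact hne (h2 l hl m hm hvl hvm))]
    exact (h01 m hm).2
  · push_neg at h
    rw [Finset.sum_eq_zero h]; norm_num

open Function
lemma sternfeld_isClopen_disjointed {α : Type*} [TopologicalSpace α] (V : ℕ → Set α)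
    (h : ∀ m, IsClopen (V m)) (m : ℕ) : IsClopen (disjointed V m) := by
  have hp : ∀ m, IsClopen (partialSups V m) := by
    intro m
    induction m with
    | zero => simpa [partialSups_zero] using h 0
    | succ k ih => rw [← Order.succ_eq_add_one, partialSups_succ]; exact ih.union (h (k+1))
  cases m with
  | zero => simpa [disjointed_zero] using h 0
  | succ k => rw [disjointed_add_one]; exact (h (k+1)).diff (hp k)

variable {n : ℕ} {Y : Fin (n + 1) → Type*}
    [∀ i, TopologicalSpace (Y i)] [∀ i, CompactSpace (Y i)]
    [∀ i, TopologicalSpace.MetrizableSpace (Y i)]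

/-- Tube lemma for a point whose fiber is a singleton. -/
lemma sternfeld_tube_lemma (X : Set (Π i, Y i)) [CompactSpace X] (i : Fin (n + 1)) (x : X)
    (hxf : ∀ x' : X, (x' : Π j, Y j) i = (x : Π j, Y j) i → x' = x)
    (N : Set X) (hN : IsOpen N) (hxN : x ∈ N) :
    ∃ W : Set (Y i), IsOpen W ∧ (x : Π j, Y j) i ∈ W ∧
      ∀ x' : X, (x' : Π j, Y j) i ∈ W → x' ∈ N := by
  have hq : Continuous (fun x' : X => (x' : Π j, Y j) i) :=
    (continuous_apply i).comp continuous_subtype_val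
  have hKc : IsCompact ((fun x' : X => (x' : Π j, Y j) i) '' Nᶜ) :=
    (hN.isClosed_compl.isCompact).image hq
  refine ⟨((fun x' : X => (x' : Π j, Y j) i) '' Nᶜ)ᶜ, hKc.isClosed.isOpen_compl, ?_, ?_⟩
  · intro hmem
    obtain ⟨x', hx', hx'eq⟩ := hmem
    exact hx' (hxf x' hx'eq ▸ hxN)
  · intro x' hx'
    by_contra hcon
    exact hx' ⟨x', hcon, rfl⟩

/-- Per-coordinate construction: a countable pairwise-disjoint family of open subsets
of `Y i` whose tubes cover `A i` and have `f`-values `ε`-close to centers `c`. -/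
lemma sternfeld_piece_lemma (X : Set (Π i, Y i)) [CompactSpace X]
    (A : Fin (n + 1) → Set X) (hA : ∀ i, ZeroDimSubset (A i))
    (hfiber : ∀ i, ∀ x ∈ A i, ∀ x' : X, (x' : Π j, Y j) i = (x : Π j, Y j) i → x' = x)
    (i : Fin (n + 1)) (f : C(X, ℝ)) {ε : ℝ} (hε : 0 < ε) :
    ∃ (U : ℕ → Set (Y i)) (c : ℕ → ℝ),
      (∀ m, IsOpen (U m)) ∧ (Pairwise (Disjoint on U)) ∧
      (∀ x : X, x ∈ A i → ∃ m, (x : Π j, Y j) i ∈ U m) ∧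
      (∀ m, ∀ x : X, (x : Π j, Y j) i ∈ U m → |f x - c m| ≤ ε) ∧
      (∀ m, |c m| ≤ ‖f‖) := by
  by_cases hAi : (A i).Nonempty
  · letI : MetricSpace (Y i) := TopologicalSpace.metrizableSpaceMetric (Y i)
    haveI : SecondCountableTopology X := by
      letI := TopologicalSpace.metrizableSpaceMetric X
      infer_instance
    set q : X → Y i := fun x => (x : Π j, Y j) i with hqdef
    have hq : Continuous q := (continuous_apply i).comp continuous_subtype_val
    have key : ∀ a : (A i), ∃ V : Set (A i), IsClopen V ∧ a ∈ V ∧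
        ∃ W : Set (Y i), IsOpen W ∧
          (∀ x' : X, q x' ∈ W → |f x' - f (a : X)| ≤ ε) ∧
          V ⊆ (fun b : (A i) => q (b : X)) ⁻¹' W := by
      intro a
      have hfa : ∀ x' : X, (x' : Π j, Y j) i = ((a : X) : Π j, Y j) i → x' = (a : X) :=
        hfiber i (a : X) a.2
      obtain ⟨W, hWo, hWx, hWt⟩ := sternfeld_tube_lemma X i (a : X) hfa
        (f ⁻¹' (Metric.ball (f (a : X)) ε))
        (f.continuous.isOpen_preimage _ Metric.isOpen_ball)
        (by simp [hε])
      have hOopen : IsOpen ((fun b : (A i) => q (b : X)) ⁻¹' W) :=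
        hWo.preimage (hq.comp continuous_subtype_val)
      obtain ⟨V, hVclopen, haV, hVsub⟩ := hA i a _ hOopen hWx
      refine ⟨V, hVclopen, haV, W, hWo, ?_, hVsub⟩
      intro x' hx'
      have := hWt x' hx'
      simp only [Set.mem_preimage, Metric.mem_ball, Real.dist_eq] at this
      exact this.le
    choose V hVclopen haV W hWopen hWosc hVsubW using key
    obtain ⟨T, hTc, hTU⟩ := TopologicalSpace.isOpen_iUnion_countable V
      (fun a => (hVclopen a).isOpen)
    have hTuniv : ⋃ a ∈ T, V a = Set.univ := by
      rw [hTU]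
      apply Set.eq_univ_of_univ_subset
      intro a _
      exact Set.mem_iUnion.mpr ⟨a, haV a⟩
    have hTne : T.Nonempty := by
      rcases hAi with ⟨x0, hx0⟩
      by_contra hT
      rw [Set.not_nonempty_iff_eq_empty] at hT
      rw [hT] at hTuniv
      simp at hTuniv
      exact (hTuniv ▸ Set.mem_univ (⟨x0, hx0⟩ : (A i)) :
        (⟨x0, hx0⟩ : (A i)) ∈ (∅ : Set (A i)))
    obtain ⟨e, he⟩ := hTc.exists_eq_range hTne
    set V' : ℕ → Set (A i) := disjointed (fun m => V (e m)) with hV'def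
    have hV'clopen : ∀ m, IsClopen (V' m) :=
      sternfeld_isClopen_disjointed _ (fun m => hVclopen (e m))
    have hV'cover : ⋃ m, V' m = Set.univ := by
      rw [hV'def, iUnion_disjointed, ← Set.biUnion_range, ← he, hTuniv]
    have hV'disj : Pairwise (Disjoint on V') := disjoint_disjointed _
    have hV'sub : ∀ m, V' m ⊆ V (e m) := disjointed_subset _
    set D : ℕ → Set (Y i) := fun m => (fun b : (A i) => q (b : X)) '' (V' m) with hDdef
    set E : ℕ → Set (Y i) := fun m => (fun b : (A i) => q (b : X)) '' (V' m)ᶜ with hEdef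
    have hsep : ∀ m, ∀ a : (A i), a ∈ V' m → q (a : X) ∉ closure (E m) := by
      intro m a haVm hmem
      have hclE : closure (E m) ⊆ q '' (closure (Subtype.val '' (V' m)ᶜ)) := by
        apply closure_minimal
        · rintro y ⟨b, hb, rfl⟩
          exact ⟨(b : X), subset_closure ⟨b, hb, rfl⟩, rfl⟩
        · exact ((isClosed_closure.isCompact).image hq).isClosed
      obtain ⟨x', hx'mem, hx'eq⟩ := hclE hmem
      have hx'a : x' = (a : X) := hfiber i (a : X) a.2 x' hx'eq
      rw [hx'a] at hx'mem
      have : a ∈ closure ((V' m)ᶜ) := closure_subtype.mpr hx'mem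
      rw [IsClosed.closure_eq ((hV'clopen m).isOpen.isClosed_compl)] at this
      exact this haVm
    set U : ℕ → Set (Y i) := fun m =>
      W (e m) ∩ {y | EMetric.infEdist y (D m) < EMetric.infEdist y (E m)} with hUdef
    have hUopen : ∀ m, IsOpen (U m) :=
      fun m => (hWopen (e m)).inter
        (isOpen_lt EMetric.continuous_infEdist EMetric.continuous_infEdist)
    have hmemU : ∀ m, ∀ a : (A i), a ∈ V' m → q (a : X) ∈ U m := by
      intro m a haVm
      constructor
      · exact hVsubW (e m) (hV'sub m haVm)
      · have h1 : EMetric.infEdist (q (a : X)) (D m) = 0 :=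
          EMetric.infEdist_zero_of_mem ⟨a, haVm, rfl⟩
        have h2 : EMetric.infEdist (q (a : X)) (E m) ≠ 0 := by
          intro h0
          exact hsep m a haVm (EMetric.mem_closure_iff_infEdist_zero.mpr h0)
        simp only [Set.mem_setOf_eq, h1]
        exact pos_iff_ne_zero.mpr h2
    have hUdisj : Pairwise (Disjoint on U) := by
      intro m l hml
      rw [Function.onFun, Set.disjoint_left]
      intro y hym hyl
      have hDlE : D l ⊆ E m := by
        rintro _ ⟨b, hb, rfl⟩
        refine ⟨b, ?_, rfl⟩
        intro hbm
        exact (Set.disjoint_left.mp (hV'disj hml) hbm) hb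
      have hDmE : D m ⊆ E l := by
        rintro _ ⟨b, hb, rfl⟩
        refine ⟨b, ?_, rfl⟩
        intro hbl
        exact (Set.disjoint_left.mp (hV'disj hml) hb) hbl
      have h1 : EMetric.infEdist y (D m) < EMetric.infEdist y (D l) :=
        lt_of_lt_of_le hym.2 (EMetric.infEdist_anti hDlE)
      have h2 : EMetric.infEdist y (D l) < EMetric.infEdist y (D m) :=
        lt_of_lt_of_le hyl.2 (EMetric.infEdist_anti hDmE)
      exact absurd (h1.trans h2) (lt_irrefl _)
    refine ⟨U, fun m => f ((e m : (A i)) : X), hUopen, hUdisj, ?_, ?_, ?_⟩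
    · intro x hx
      have : (⟨x, hx⟩ : (A i)) ∈ ⋃ m, V' m := hV'cover ▸ Set.mem_univ _
      obtain ⟨m, hm⟩ := Set.mem_iUnion.mp this
      exact ⟨m, hmemU m ⟨x, hx⟩ hm⟩
    · intro m x hx
      exact hWosc (e m) x hx.1
    · intro m
      have := (f.norm_coe_le_norm ((e m : (A i)) : X))
      rwa [Real.norm_eq_abs] at this
  · refine ⟨fun _ => ∅, fun _ => 0, fun _ => isOpen_empty, ?_, ?_, ?_, ?_⟩
    · intro m l _; simp [Function.onFun]
    · intro x hx; exact absurd ⟨x, hx⟩ hAi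
    · intro m x hx; exact absurd hx (Set.notMem_empty _)
    · intro m; simpa using norm_nonneg f

end Aux

section CLM

variable {ι : Type*} [Fintype ι] {Y : ι → Type*}
    [∀ i, TopologicalSpace (Y i)] [∀ i, CompactSpace (Y i)]

/-- `inducedL` as a continuous linear map. -/
noncomputable def inducedLclm (X : Set (Π i, Y i)) [CompactSpace X] :
    C((Σ i, Y i), ℝ) →L[ℝ] C(X, ℝ) :=
  LinearMap.mkContinuous
    { toFun := inducedL X
      map_add' := by
        intro g h
        ext x
        simp [inducedL, Finset.sum_add_distrib]
      map_smul' := by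
        intro r g
        ext x
        simp [inducedL, Finset.mul_sum] }
    (Fintype.card ι)
    (by
      intro g
      rw [ContinuousMap.norm_le _ (by positivity)]
      intro x
      calc ‖inducedL X g x‖ = |∑ i, g ⟨i, (x : Π i, Y i) i⟩| := rfl
        _ ≤ ∑ i, |g ⟨i, (x : Π i, Y i) i⟩| := Finset.abs_sum_le_sum_abs _ _
        _ ≤ ∑ _i : ι, ‖g‖ := Finset.sum_le_sum (fun i _ => by
              have := g.norm_coe_le_norm ⟨i, (x : Π i, Y i) i⟩
              rwa [Real.norm_eq_abs] at this)
        _ = (Fintype.card ι) * ‖g‖ := by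
              rw [Finset.sum_const, Finset.card_univ, nsmul_eq_mul])

lemma inducedLclm_apply (X : Set (Π i, Y i)) [CompactSpace X] (g : C((Σ i, Y i), ℝ)) :
    inducedLclm X g = inducedL X g := rfl

end CLM

section Step

variable {n : ℕ} {Y : Fin (n + 1) → Type*}
    [∀ i, TopologicalSpace (Y i)] [∀ i, CompactSpace (Y i)]
    [∀ i, TopologicalSpace.MetrizableSpace (Y i)]

/-- One step of the Kolmogorov-type iteration. -/
lemma sternfeld_step_lemma (X : Set (Π i, Y i)) [CompactSpace X]
    (A : Fin (n + 1) → Set X) (hA : ∀ i, ZeroDimSubset (A i))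
    (hcover : ⋃ i, A i = Set.univ)
    (hfiber : ∀ i, ∀ x ∈ A i, ∀ x' : X, (x' : Π j, Y j) i = (x : Π j, Y j) i → x' = x)
    (f : C(X, ℝ)) {ε : ℝ} (hε : 0 < ε) :
    ∃ g : C((Σ i, Y i), ℝ), ‖g‖ ≤ ‖f‖ ∧
      ‖f - inducedL X g‖ ≤ (1 - ((n : ℝ) + 1)⁻¹) * ‖f‖ + ε := by
  haveI : ∀ i, NormalSpace (Y i) := fun i => by
    letI := TopologicalSpace.metrizableSpaceMetric (Y i); infer_instance
  haveI : NormalSpace X := by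
    letI := TopologicalSpace.metrizableSpaceMetric X; infer_instance
  choose U c hUopen hUdisj hUcover hUosc hcbound using
    fun i => sternfeld_piece_lemma X A hA hfiber i f hε
  set κ : ℝ := (n : ℝ) + 1 with hκdef
  have hκ1 : 1 ≤ κ := by rw [hκdef]; have : (0:ℝ) ≤ n := Nat.cast_nonneg n; linarith
  have hκpos : 0 < κ := lt_of_lt_of_le one_pos hκ1
  have hκinv_nonneg : (0:ℝ) ≤ κ⁻¹ := by positivity
  have hκinv_le_one : κ⁻¹ ≤ 1 := by
    rw [inv_le_one_iff₀]; right; exact hκ1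
  set q : ∀ i, X → Y i := fun i x => (x : Π j, Y j) i with hqdef
  have hqc : ∀ i, Continuous (q i) :=
    fun i => (continuous_apply i).comp continuous_subtype_val
  set O : (Fin (n + 1) × ℕ) → Set X := fun k => q k.1 ⁻¹' U k.1 k.2 with hOdef
  have hOopen : ∀ k, IsOpen (O k) := fun k => (hUopen k.1 k.2).preimage (hqc k.1)
  have hOcover : (Set.univ : Set X) ⊆ ⋃ k, O k := by
    intro x _
    have hx : x ∈ ⋃ i, A i := hcover ▸ Set.mem_univ x
    obtain ⟨i, hi⟩ := Set.mem_iUnion.mp hx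
    obtain ⟨m, hm⟩ := hUcover i x hi
    exact Set.mem_iUnion.mpr ⟨(i, m), hm⟩
  obtain ⟨t, ht⟩ := isCompact_univ.elim_finite_subcover O hOopen hOcover
  set u : (Fin (n + 1) × ℕ) → Set X := fun k => if k ∈ t then O k else ∅ with hudef
  have huopen : ∀ k, IsOpen (u k) := fun k => by
    by_cases h : k ∈ t <;> simp [hudef, h, hOopen k]
  have hucover : (Set.univ : Set X) ⊆ ⋃ k, u k := by
    intro x hx
    obtain ⟨k, hkt, hk⟩ := Set.mem_iUnion₂.mp (ht hx)
    exact Set.mem_iUnion.mpr ⟨k, by simp [hudef, hkt, hk]⟩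
  obtain ⟨v, hvcover, hvopen, hvcl⟩ := exists_subset_iUnion_closure_subset isClosed_univ
    huopen (fun x _ => Set.Finite.subset t.finite_toSet (fun k hk => by
      simp only [Set.mem_setOf_eq] at hk
      by_contra hkt
      have hkt' : k ∉ t := fun h => hkt (Finset.mem_coe.mpr h)
      rw [hudef] at hk
      simp only at hk
      rw [if_neg hkt'] at hk
      exact absurd hk (Set.notMem_empty _))) hucover
  have hurysohn : ∀ k : Fin (n + 1) × ℕ, ∃ φ : C(Y k.1, ℝ),
      Set.EqOn φ 0 (U k.1 k.2)ᶜ ∧ Set.EqOn φ 1 (q k.1 '' closure (v k)) ∧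
      ∀ y, φ y ∈ Set.Icc (0:ℝ) 1 := by
    intro k
    have hQc : IsCompact (q k.1 '' closure (v k)) :=
      (isClosed_closure.isCompact).image (hqc k.1)
    have hQsub : q k.1 '' closure (v k) ⊆ U k.1 k.2 := by
      rintro _ ⟨x, hx, rfl⟩
      have hvk := hvcl k hx
      by_cases hkt : k ∈ t
      · rw [hudef] at hvk; simp only at hvk; rwa [if_pos hkt] at hvk
      · rw [hudef] at hvk; simp only at hvk; rw [if_neg hkt] at hvk
        exact absurd hvk (Set.notMem_empty _)
    obtain ⟨φ, h0, h1, h01⟩ := exists_continuous_zero_one_of_isClosed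
      (hUopen k.1 k.2).isClosed_compl hQc.isClosed
      (Set.disjoint_compl_left_iff_subset.mpr hQsub)
    exact ⟨φ, h0, h1, fun y => h01 y⟩
  choose Φ hΦ0 hΦ1 hΦ01 using hurysohn
  set M : Finset ℕ := t.image Prod.snd with hMdef
  set g : C((Σ i, Y i), ℝ) :=
    ⟨fun z => κ⁻¹ * ∑ m ∈ M, c z.1 m * Φ (z.1, m) z.2, by
      apply continuous_sigma
      intro i
      show Continuous fun y : Y i => κ⁻¹ * ∑ m ∈ M, c i m * Φ (i, m) y
      apply Continuous.mul continuous_const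
      apply continuous_finset_sum
      intro m _
      exact Continuous.mul continuous_const (Φ (i, m)).continuous⟩ with hgdef
  have hgval : ∀ (i : Fin (n + 1)) (y : Y i),
      g ⟨i, y⟩ = κ⁻¹ * ∑ m ∈ M, c i m * Φ (i, m) y := fun i y => rfl
  have hΦne : ∀ (i : Fin (n + 1)) (m : ℕ) (y : Y i), Φ (i, m) y ≠ 0 → y ∈ U i m := by
    intro i m y h
    by_contra hy
    exact h (hΦ0 (i, m) hy)
  have hΦnonneg : ∀ (i : Fin (n + 1)) (m : ℕ) (y : Y i), 0 ≤ Φ (i, m) y :=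
    fun i m y => (hΦ01 (i, m) y).1
  have hΦsum_le_one : ∀ (i : Fin (n + 1)) (y : Y i), ∑ m ∈ M, Φ (i, m) y ≤ 1 := by
    intro i y
    apply sternfeld_sum_le_one_helper _ _ (fun m _ => hΦ01 (i, m) y)
    intro m _ l _ hm hl
    by_contra hne
    have h1 := hΦne i m y hm
    have h2 := hΦne i l y hl
    exact (Set.disjoint_left.mp (hUdisj i hne) h1) h2
  have hgnorm : ‖g‖ ≤ ‖f‖ := by
    rw [ContinuousMap.norm_le _ (norm_nonneg f)]
    rintro ⟨i, y⟩
    rw [Real.norm_eq_abs]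
    have h1 : |∑ m ∈ M, c i m * Φ (i, m) y| ≤ ‖f‖ := by
      calc |∑ m ∈ M, c i m * Φ (i, m) y|
          ≤ ∑ m ∈ M, |c i m * Φ (i, m) y| := Finset.abs_sum_le_sum_abs _ _
        _ ≤ ∑ m ∈ M, ‖f‖ * Φ (i, m) y := Finset.sum_le_sum (fun m _ => by
            rw [abs_mul, abs_of_nonneg (hΦnonneg i m y)]
            exact mul_le_mul_of_nonneg_right (hcbound i m) (hΦnonneg i m y))
        _ = ‖f‖ * ∑ m ∈ M, Φ (i, m) y := by rw [Finset.mul_sum]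
        _ ≤ ‖f‖ * 1 := mul_le_mul_of_nonneg_left (hΦsum_le_one i y) (norm_nonneg f)
        _ = ‖f‖ := mul_one _
    show |g ⟨i, y⟩| ≤ ‖f‖
    rw [hgval, abs_mul, abs_of_nonneg hκinv_nonneg]
    calc κ⁻¹ * |∑ m ∈ M, c i m * Φ (i, m) y| ≤ 1 * ‖f‖ :=
          mul_le_mul hκinv_le_one h1 (abs_nonneg _) one_pos.le
      _ = ‖f‖ := one_mul _
  refine ⟨g, hgnorm, ?_⟩
  have hbound_nonneg : (0:ℝ) ≤ (1 - κ⁻¹) * ‖f‖ + ε := by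
    have : (0:ℝ) ≤ 1 - κ⁻¹ := by linarith
    positivity
  rw [ContinuousMap.norm_le _ hbound_nonneg]
  intro x
  rw [ContinuousMap.sub_apply, Real.norm_eq_abs]
  set lam : ℝ := ∑ i, ∑ m ∈ M, Φ (i, m) (q i x) with hlamdef
  have hlam_le : lam ≤ κ := by
    calc lam ≤ ∑ _i : Fin (n + 1), (1:ℝ) :=
          Finset.sum_le_sum (fun i _ => hΦsum_le_one i _)
      _ = κ := by
          rw [Finset.sum_const, Finset.card_univ, Fintype.card_fin, nsmul_eq_mul, mul_one, hκdef]
          push_cast; ring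
  have hlam_ge : 1 ≤ lam := by
    have hx : x ∈ ⋃ k, v k := hvcover (Set.mem_univ x)
    obtain ⟨k, hk⟩ := Set.mem_iUnion.mp hx
    obtain ⟨i0, m0⟩ := k
    have hkt : (i0, m0) ∈ t := by
      by_contra hkt
      have := hvcl (i0, m0) (subset_closure hk)
      rw [hudef] at this; simp only at this; rw [if_neg hkt] at this
      exact absurd this (Set.notMem_empty _)
    have hΦk : Φ (i0, m0) (q i0 x) = 1 := by
      have hmem : q i0 x ∈ q i0 '' closure (v (i0, m0)) := ⟨x, subset_closure hk, rfl⟩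
      simpa using hΦ1 (i0, m0) hmem
    have hmM : m0 ∈ M := Finset.mem_image_of_mem Prod.snd hkt
    calc (1:ℝ) = Φ (i0, m0) (q i0 x) := hΦk.symm
      _ ≤ ∑ m ∈ M, Φ (i0, m) (q i0 x) :=
          Finset.single_le_sum (f := fun m => Φ (i0, m) (q i0 x))
            (fun m _ => hΦnonneg _ _ _) hmM
      _ ≤ lam := by
          rw [hlamdef]
          exact Finset.single_le_sum (f := fun i => ∑ m ∈ M, Φ (i, m) (q i x))
            (fun i _ => Finset.sum_nonneg (fun m _ => hΦnonneg _ _ _)) (Finset.mem_univ i0)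
  have hLg : inducedL X g x = κ⁻¹ * ∑ i, ∑ m ∈ M, c i m * Φ (i, m) (q i x) := by
    show ∑ i, g ⟨i, (x : Π j, Y j) i⟩ = _
    rw [Finset.mul_sum]
    exact Finset.sum_congr rfl (fun i _ => hgval i (q i x))
  have hterm : ∀ (i : Fin (n + 1)) (m : ℕ),
      |Φ (i, m) (q i x) * (f x - c i m)| ≤ Φ (i, m) (q i x) * ε := by
    intro i m
    by_cases h : Φ (i, m) (q i x) = 0
    · simp [h]
    · rw [abs_mul, abs_of_nonneg (hΦnonneg i m _)]
      exact mul_le_mul_of_nonneg_left (hUosc i m x (hΦne i m _ h)) (hΦnonneg i m _)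
  have key1 : |κ⁻¹ * lam * f x - inducedL X g x| ≤ ε := by
    rw [hLg]
    have heq : κ⁻¹ * lam * f x - κ⁻¹ * ∑ i, ∑ m ∈ M, c i m * Φ (i, m) (q i x)
        = κ⁻¹ * ∑ i, ∑ m ∈ M, Φ (i, m) (q i x) * (f x - c i m) := by
      rw [hlamdef, mul_assoc, ← mul_sub]
      congr 1
      rw [Finset.sum_mul, ← Finset.sum_sub_distrib]
      refine Finset.sum_congr rfl (fun i _ => ?_)
      rw [Finset.sum_mul, ← Finset.sum_sub_distrib]
      refine Finset.sum_congr rfl (fun m _ => ?_)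
      ring
    rw [heq, abs_mul, abs_of_nonneg hκinv_nonneg]
    have h2 : |∑ i, ∑ m ∈ M, Φ (i, m) (q i x) * (f x - c i m)| ≤ lam * ε := by
      calc |∑ i, ∑ m ∈ M, Φ (i, m) (q i x) * (f x - c i m)|
          ≤ ∑ i, |∑ m ∈ M, Φ (i, m) (q i x) * (f x - c i m)| := Finset.abs_sum_le_sum_abs _ _
        _ ≤ ∑ i, ∑ m ∈ M, |Φ (i, m) (q i x) * (f x - c i m)| :=
            Finset.sum_le_sum (fun i _ => Finset.abs_sum_le_sum_abs _ _)
        _ ≤ ∑ i, ∑ m ∈ M, Φ (i, m) (q i x) * ε :=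
            Finset.sum_le_sum (fun i _ => Finset.sum_le_sum (fun m _ => hterm i m))
        _ = lam * ε := by
            rw [hlamdef, Finset.sum_mul]
            refine Finset.sum_congr rfl (fun i _ => ?_)
            rw [Finset.sum_mul]
    calc κ⁻¹ * |∑ i, ∑ m ∈ M, Φ (i, m) (q i x) * (f x - c i m)|
        ≤ κ⁻¹ * (lam * ε) := mul_le_mul_of_nonneg_left h2 hκinv_nonneg
      _ ≤ κ⁻¹ * (κ * ε) :=
          mul_le_mul_of_nonneg_left (mul_le_mul_of_nonneg_right hlam_le hε.le) hκinv_nonneg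
      _ = ε := by rw [← mul_assoc, inv_mul_cancel₀ (ne_of_gt hκpos), one_mul]
  have hklam_le_one : κ⁻¹ * lam ≤ 1 := by
    calc κ⁻¹ * lam ≤ κ⁻¹ * κ := mul_le_mul_of_nonneg_left hlam_le hκinv_nonneg
      _ = 1 := inv_mul_cancel₀ (ne_of_gt hκpos)
  have key2 : |f x - κ⁻¹ * lam * f x| ≤ (1 - κ⁻¹) * ‖f‖ := by
    have heq : f x - κ⁻¹ * lam * f x = (1 - κ⁻¹ * lam) * f x := by ring
    have hklam_ge : κ⁻¹ ≤ κ⁻¹ * lam := le_mul_of_one_le_right hκinv_nonneg hlam_ge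
    rw [heq, abs_mul, abs_of_nonneg (by linarith)]
    have hfx : |f x| ≤ ‖f‖ := by
      have := f.norm_coe_le_norm x; rwa [Real.norm_eq_abs] at this
    exact mul_le_mul (by linarith) hfx (abs_nonneg _) (by linarith)
  calc |f x - inducedL X g x|
      ≤ |f x - κ⁻¹ * lam * f x| + |κ⁻¹ * lam * f x - inducedL X g x| := abs_sub_le _ _ _
    _ ≤ (1 - κ⁻¹) * ‖f‖ + ε := add_le_add key2 key1

end Step

/-- A Sternfeld-type embedding is basic: the induced transformation
`L : C(Z, ℝ) → C(X, ℝ)` is surjective, i.e. every continuous `f : X → ℝ` is of the form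
`f x = g y₁ + ⋯ + g y_{n+1}` for some continuous `g : Z → ℝ`. -/
theorem statement3 {n : ℕ} (hn : 1 ≤ n) {Y : Fin (n + 1) → Type*}
    [∀ i, TopologicalSpace (Y i)] [∀ i, CompactSpace (Y i)]
    [∀ i, TopologicalSpace.MetrizableSpace (Y i)]
    (X : Set (Π i, Y i)) [CompactSpace X]
    (A : Fin (n + 1) → Set X) (hA : ∀ i, ZeroDimSubset (A i))
    (hcover : ⋃ i, A i = Set.univ)
    (hfiber : ∀ i, ∀ x ∈ A i, ∀ x' : X, (x' : Π j, Y j) i = (x : Π j, Y j) i → x' = x) :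
    Function.Surjective (inducedL X) := by
  intro f
  set κ : ℝ := (n : ℝ) + 1 with hκdef
  have hκ1 : 1 ≤ κ := by rw [hκdef]; have : (0:ℝ) ≤ n := Nat.cast_nonneg n; linarith
  have hκpos : 0 < κ := lt_of_lt_of_le one_pos hκ1
  set qr : ℝ := 1 - (2 * κ)⁻¹ with hqrdef
  have h2κinv_pos : 0 < (2 * κ)⁻¹ := by positivity
  have h2κinv_le : (2 * κ)⁻¹ ≤ 1 := by
    rw [inv_le_one_iff₀]; right; linarith
  have hq0 : 0 ≤ qr := by rw [hqrdef]; linarith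
  have hq1 : qr < 1 := by rw [hqrdef]; linarith
  have step : ∀ h : C(X, ℝ), ∃ g : C((Σ i, Y i), ℝ),
      ‖g‖ ≤ ‖h‖ ∧ ‖h - inducedL X g‖ ≤ qr * ‖h‖ := by
    intro h
    by_cases hh : h = 0
    · refine ⟨0, by simp [hh], ?_⟩
      have hL0 : inducedL X (0 : C((Σ i, Y i), ℝ)) = 0 := by
        ext x; simp [inducedL]
      simp [hh, hL0]
    · have hhn : 0 < ‖h‖ := norm_pos_iff.mpr hh
      obtain ⟨g, hg1, hg2⟩ := sternfeld_step_lemma X A hA hcover hfiber h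
        (show 0 < ‖h‖ * (2 * κ)⁻¹ by positivity)
      refine ⟨g, hg1, ?_⟩
      have heq : (1 - κ⁻¹) * ‖h‖ + ‖h‖ * (2 * κ)⁻¹ = qr * ‖h‖ := by
        rw [hqrdef]
        field_simp
        ring
      rw [← heq]
      exact hg2
  choose G hG1 hG2 using step
  set F : ℕ → C(X, ℝ) := fun m => (fun h => h - inducedL X (G h))^[m] f with hFdef
  have hF0 : F 0 = f := rfl
  have hFsucc : ∀ m, F (m + 1) = F m - inducedL X (G (F m)) := by
    intro m
    rw [hFdef]
    exact Function.iterate_succ_apply' _ m f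
  have hFnorm : ∀ m, ‖F m‖ ≤ qr ^ m * ‖f‖ := by
    intro m
    induction m with
    | zero => simp [hF0]
    | succ k ih =>
      rw [hFsucc k]
      calc ‖F k - inducedL X (G (F k))‖ ≤ qr * ‖F k‖ := hG2 (F k)
        _ ≤ qr * (qr ^ k * ‖f‖) := mul_le_mul_of_nonneg_left ih hq0
        _ = qr ^ (k + 1) * ‖f‖ := by ring
  have hsum : Summable (fun m => G (F m)) := by
    apply Summable.of_norm_bounded (g := fun m => qr ^ m * ‖f‖)
      ((summable_geometric_of_lt_one hq0 hq1).mul_right ‖f‖)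
    intro m
    exact le_trans (hG1 (F m)) (hFnorm m)
  refine ⟨∑' m, G (F m), ?_⟩
  have hhs : HasSum (fun m => inducedLclm X (G (F m))) (inducedLclm X (∑' m, G (F m))) :=
    HasSum.mapL (inducedLclm X) hsum.hasSum
  have hpartial : ∀ N : ℕ, ∑ m ∈ Finset.range N, inducedLclm X (G (F m)) = f - F N := by
    intro N
    induction N with
    | zero => simp [hF0]
    | succ k ih =>
      rw [Finset.sum_range_succ, ih, hFsucc k, inducedLclm_apply]
      abel
  have hFtend : Filter.Tendsto F Filter.atTop (nhds 0) := by
    apply squeeze_zero_norm hFnorm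
    have := (tendsto_pow_atTop_nhds_zero_of_lt_one hq0 hq1).mul_const ‖f‖
    simpa using this
  have hlim1 : Filter.Tendsto (fun N => ∑ m ∈ Finset.range N, inducedLclm X (G (F m)))
      Filter.atTop (nhds (inducedLclm X (∑' m, G (F m)))) := hhs.tendsto_sum_nat
  have hlim2 : Filter.Tendsto (fun N => f - F N) Filter.atTop (nhds f) := by
    have := Filter.Tendsto.const_sub f hFtend
    simpa using this
  have hfin : inducedLclm X (∑' m, G (F m)) = f := by
    apply tendsto_nhds_unique _ hlim2
    simpa only [hpartial] using hlim1
  rw [← inducedLclm_apply]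
  exact hfin
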